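/- arXiv:math/0308067 — 4 statements merged into one kernel-verified Lean document; each statement's English description precedes it below -/
import Mathlib

section
/- For all K ≥ 1 and C, R ≥ 0 there exist K' ≥ 1 and C' ≥ 0 with the following property. Let G be a group with the word metric coming from a finite generating set S, let N be a normal subgroup, and equip G/N with the word metric coming from the image of S. Suppose Φ : G → G is a (K,C)-quasi-isometry that R-coarsely respects the cosets of N, and suppose φ : G/N → G/N is any map such that for every g ∈ G the Hausdorff distance in G between Φ(gN) and the coset of N corresponding to φ(gN) is at most R. Then φ is a (K',C')-quasi-isometry of G/N. -/
open Pointwise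

/-- The word length of `g` with respect to the generating set `S`: the least `n` such that
`g` is a product of `n` elements of `S ∪ S⁻¹`. -/
noncomputable def wordLength {G : Type*} [Group G] (S : Set G) (g : G) : ℕ :=
  sInf {n : ℕ | g ∈ (S ∪ S⁻¹) ^ n}

/-- `dist` on `G` is the word metric coming from the finite generating set `S`. -/
def IsWordMetric {G : Type*} [Group G] [MetricSpace G] (S : Set G) : Prop :=
  S.Finite ∧ Subgroup.closure S = ⊤ ∧
    ∀ g h : G, dist g h = (wordLength S (g⁻¹ * h) : ℝ)

/-- `f` is a `(K,C)`-quasi-isometry between metric spaces. -/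
def IsQuasiIsometry {X Y : Type*} [MetricSpace X] [MetricSpace Y] (K C : ℝ) (f : X → Y) : Prop :=
  (∀ a b : X, (1 / K) * dist a b - C ≤ dist (f a) (f b) ∧
      dist (f a) (f b) ≤ K * dist a b + C) ∧
    ∀ y : Y, ∃ a : X, dist (f a) y ≤ C

/-- `Φ : G → G` `R`-coarsely respects the cosets of the normal subgroup `N`: for every `g`
there is `g'` such that the Hausdorff distance between `Φ(gN)` and `g'N` is at most `R`. -/
def CoarselyRespectsCosets {G : Type*} [Group G] [MetricSpace G] (N : Subgroup G)
    (Φ : G → G) (R : ℝ) : Prop :=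
  ∀ g : G, ∃ g' : G,
    EMetric.hausdorffEdist (Φ '' (g • (N : Set G))) (g' • (N : Set G)) ≤ ENNReal.ofReal R

section Helpers
variable {G : Type*} [Group G]

lemma mem_pow_of_closure_top {S : Set G} (hS : Subgroup.closure S = ⊤) (x : G) :
    ∃ n, x ∈ (S ∪ S⁻¹) ^ n := by
  have hx : x ∈ Submonoid.closure (S ∪ S⁻¹) := by
    rw [← Subgroup.closure_toSubmonoid]
    exact hS ▸ Subgroup.mem_top x
  obtain ⟨l, hl, rfl⟩ := Submonoid.exists_list_of_mem_closure hx
  clear hx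
  refine ⟨l.length, ?_⟩
  induction l with
  | nil => simp [Set.mem_one]
  | cons a t ih =>
    rw [List.prod_cons, List.length_cons, pow_succ']
    exact Set.mul_mem_mul (hl a (by simp)) (ih fun y hy => hl y (by simp [hy]))

lemma image_gen (N : Subgroup G) [N.Normal] (S : Set G) (n : ℕ) :
    (((QuotientGroup.mk : G → G ⧸ N) '' S) ∪ ((QuotientGroup.mk : G → G ⧸ N) '' S)⁻¹) ^ n
      = (QuotientGroup.mk : G → G ⧸ N) '' ((S ∪ S⁻¹) ^ n) := by
  have h1 : ((QuotientGroup.mk : G → G ⧸ N) '' S)⁻¹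
      = (QuotientGroup.mk : G → G ⧸ N) '' S⁻¹ := by
    ext y
    constructor
    · intro hy
      rw [Set.mem_inv] at hy
      obtain ⟨x, hx, hxy⟩ := hy
      exact ⟨x⁻¹, Set.inv_mem_inv.mpr hx, by
        rw [QuotientGroup.mk_inv, hxy, inv_inv]⟩
    · rintro ⟨x, hx, rfl⟩
      rw [Set.mem_inv, ← QuotientGroup.mk_inv]
      exact ⟨x⁻¹, Set.mem_inv.mp hx, rfl⟩
  have h2 : ((QuotientGroup.mk : G → G ⧸ N) '' S) ∪ ((QuotientGroup.mk : G → G ⧸ N) '' S)⁻¹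
      = (QuotientGroup.mk' N : G → G ⧸ N) '' (S ∪ S⁻¹) := by
    rw [Set.image_union, h1]; rfl
  rw [h2, ← Set.image_pow]
  rfl

lemma wordLength_mk_le (N : Subgroup G) [N.Normal] {S : Set G}
    (hS : Subgroup.closure S = ⊤) (x : G) :
    wordLength ((QuotientGroup.mk : G → G ⧸ N) '' S) (QuotientGroup.mk x) ≤ wordLength S x := by
  obtain ⟨n, hn⟩ := mem_pow_of_closure_top hS x
  have hmem := Nat.sInf_mem (⟨n, hn⟩ : {m : ℕ | x ∈ (S ∪ S⁻¹) ^ m}.Nonempty)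
  have hh : (QuotientGroup.mk x : G ⧸ N)
      ∈ (((QuotientGroup.mk : G → G ⧸ N) '' S) ∪ ((QuotientGroup.mk : G → G ⧸ N) '' S)⁻¹)
        ^ (wordLength S x) := by
    rw [image_gen]
    exact ⟨x, hmem, rfl⟩
  exact Nat.sInf_le hh

lemma exists_lift_wordLength (N : Subgroup G) [N.Normal] {S : Set G}
    (hS : Subgroup.closure S = ⊤) (x : G) :
    ∃ x' : G, (QuotientGroup.mk x' : G ⧸ N) = QuotientGroup.mk x ∧
      wordLength S x'
        = wordLength ((QuotientGroup.mk : G → G ⧸ N) '' S) (QuotientGroup.mk x) := by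
  obtain ⟨n, hn⟩ := mem_pow_of_closure_top hS x
  have hne : {m : ℕ | (QuotientGroup.mk x : G ⧸ N)
      ∈ (((QuotientGroup.mk : G → G ⧸ N) '' S) ∪ ((QuotientGroup.mk : G → G ⧸ N) '' S)⁻¹) ^ m}.Nonempty :=
    ⟨n, by rw [Set.mem_setOf_eq, image_gen]; exact ⟨x, hn, rfl⟩⟩
  have hmem := Nat.sInf_mem hne
  rw [Set.mem_setOf_eq, image_gen] at hmem
  obtain ⟨x', hx', hmk⟩ := hmem
  refine ⟨x', hmk, le_antisymm (Nat.sInf_le hx') ?_⟩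
  calc wordLength ((QuotientGroup.mk : G → G ⧸ N) '' S) (QuotientGroup.mk x)
      = wordLength ((QuotientGroup.mk : G → G ⧸ N) '' S) (QuotientGroup.mk x') := by rw [hmk]
    _ ≤ wordLength S x' := wordLength_mk_le N hS x'

lemma mem_coset_iff {N : Subgroup G} {b h : G} :
    b ∈ h • (N : Set G) ↔ (QuotientGroup.mk b : G ⧸ N) = QuotientGroup.mk h := by
  rw [Set.mem_smul_set_iff_inv_smul_mem, smul_eq_mul, eq_comm, QuotientGroup.eq]
  exact SetLike.mem_coe

lemma exists_close {X : Type*} [MetricSpace X] {A B : Set X} {R : ℝ} (hR : 0 ≤ R)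
    (h : EMetric.hausdorffEdist A B ≤ ENNReal.ofReal R) {x : X} (hx : x ∈ A) :
    ∃ y ∈ B, dist x y ≤ R + 1 := by
  have h1 : EMetric.infEdist x B < ENNReal.ofReal (R + 1) := by
    calc EMetric.infEdist x B ≤ EMetric.hausdorffEdist A B :=
          EMetric.infEdist_le_hausdorffEdist_of_mem hx
      _ ≤ ENNReal.ofReal R := h
      _ < ENNReal.ofReal (R + 1) := by
          rw [ENNReal.ofReal_lt_ofReal_iff (by linarith)]; linarith
  obtain ⟨y, hy, hd⟩ := EMetric.infEdist_lt_iff.mp h1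
  exact ⟨y, hy, le_of_lt (edist_lt_ofReal.mp hd)⟩

end Helpers


section DistHelpers
variable {G : Type*} [Group G] [MetricSpace G] {S : Set G}
  (N : Subgroup G) [N.Normal] [MetricSpace (G ⧸ N)]

lemma dist_mk_le (hW : IsWordMetric S)
    (hWq : IsWordMetric ((QuotientGroup.mk : G → G ⧸ N) '' S)) (g h : G) :
    dist (QuotientGroup.mk g : G ⧸ N) (QuotientGroup.mk h) ≤ dist g h := by
  rw [hW.2.2 g h, hWq.2.2]
  have e : (QuotientGroup.mk g : G ⧸ N)⁻¹ * QuotientGroup.mk h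
      = QuotientGroup.mk (g⁻¹ * h) := by
    rw [QuotientGroup.mk_mul, QuotientGroup.mk_inv]
  rw [e]
  exact_mod_cast wordLength_mk_le N hW.2.1 (g⁻¹ * h)

lemma exists_realize (hW : IsWordMetric S)
    (hWq : IsWordMetric ((QuotientGroup.mk : G → G ⧸ N) '' S)) (g h : G) :
    ∃ b : G, (QuotientGroup.mk b : G ⧸ N) = QuotientGroup.mk h ∧
      dist g b = dist (QuotientGroup.mk g : G ⧸ N) (QuotientGroup.mk h) := by
  obtain ⟨x', hmk, hlen⟩ := exists_lift_wordLength N hW.2.1 (g⁻¹ * h)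
  refine ⟨g * x', ?_, ?_⟩
  · rw [QuotientGroup.mk_mul, hmk, ← QuotientGroup.mk_mul, mul_inv_cancel_left]
  · rw [hW.2.2, hWq.2.2, inv_mul_cancel_left]
    have e : (QuotientGroup.mk g : G ⧸ N)⁻¹ * QuotientGroup.mk h
        = QuotientGroup.mk (g⁻¹ * h) := by
      rw [QuotientGroup.mk_mul, QuotientGroup.mk_inv]
    rw [e]
    exact_mod_cast hlen

end DistHelpers

/-- For all `K ≥ 1`, `C, R ≥ 0` there exist `K' ≥ 1`, `C' ≥ 0` such that: for any group `G`
with a word metric, normal subgroup `N`, and `G ⧸ N` given the word metric of the image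
generating set, if `Φ : G → G` is a `(K,C)`-quasi-isometry `R`-coarsely respecting the cosets
of `N` and `φ : G ⧸ N → G ⧸ N` is any map such that for every `g` the Hausdorff distance in `G`
between `Φ(gN)` and the coset corresponding to `φ(gN)` is at most `R`, then `φ` is a
`(K',C')`-quasi-isometry. -/
theorem induced_quotient_quasiIsometry (K C R : ℝ) (hK : 1 ≤ K) (hC : 0 ≤ C) (hR : 0 ≤ R) :
    ∃ K' C' : ℝ, 1 ≤ K' ∧ 0 ≤ C' ∧
      ∀ (G : Type) [Group G] [MetricSpace G] (S : Set G), IsWordMetric S →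
        ∀ (N : Subgroup G) [N.Normal] [MetricSpace (G ⧸ N)],
          IsWordMetric ((QuotientGroup.mk : G → G ⧸ N) '' S) →
          ∀ (Φ : G → G) (φ : G ⧸ N → G ⧸ N),
            IsQuasiIsometry K C Φ → CoarselyRespectsCosets N Φ R →
            (∀ g : G,
              EMetric.hausdorffEdist (Φ '' (g • (N : Set G)))
                ((QuotientGroup.mk : G → G ⧸ N) ⁻¹' {φ (QuotientGroup.mk g)}) ≤
                ENNReal.ofReal R) →
            IsQuasiIsometry K' C' φ := by
  have hK0 : 0 < K := lt_of_lt_of_le one_pos hK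
  refine ⟨K, C + 2 * R + 2, hK, by linarith, ?_⟩
  intro G _ _ S hW N _ _ hWq Φ φ hΦ _ hφ
  -- extract a point of the φ-coset close to Φ of a coset point
  have fwd : ∀ g x : G, x ∈ g • (N : Set G) →
      ∃ p : G, (QuotientGroup.mk p : G ⧸ N) = φ (QuotientGroup.mk g) ∧
        dist (Φ x) p ≤ R + 1 := by
    intro g x hx
    obtain ⟨p, hp, hd⟩ := exists_close hR (hφ g) (Set.mem_image_of_mem Φ hx)
    exact ⟨p, Set.mem_singleton_iff.mp (Set.mem_preimage.mp hp), hd⟩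
  constructor
  · intro a b
    obtain ⟨g, rfl⟩ := QuotientGroup.mk_surjective a
    obtain ⟨h, rfl⟩ := QuotientGroup.mk_surjective b
    obtain ⟨p, hp, hdp⟩ := fwd g g (mem_coset_iff.mpr rfl)
    obtain ⟨q, hq, hdq⟩ := fwd h h (mem_coset_iff.mpr rfl)
    constructor
    · -- lower bound
      obtain ⟨b', hb', hreal⟩ := exists_realize N hW hWq p q
      -- b' is in the coset of φ (mk h)
      have hb'mem : b' ∈ (QuotientGroup.mk : G → G ⧸ N) ⁻¹' {φ (QuotientGroup.mk h)} := by
        rw [Set.mem_preimage, Set.mem_singleton_iff, hb']; exact hq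
      have hsymm : EMetric.hausdorffEdist
          ((QuotientGroup.mk : G → G ⧸ N) ⁻¹' {φ (QuotientGroup.mk h)})
          (Φ '' (h • (N : Set G))) ≤ ENNReal.ofReal R := by
        have hh := hφ h; unfold EMetric.hausdorffEdist at hh ⊢; rw [Metric.hausdorffEDist_comm]; exact hh
      obtain ⟨z, hz, hdz⟩ := exists_close hR hsymm hb'mem
      obtain ⟨c, hc, rfl⟩ := hz
      have hcmk : (QuotientGroup.mk c : G ⧸ N) = QuotientGroup.mk h := mem_coset_iff.mp hc
      have h1 : (1 / K) * dist g c - C ≤ dist (Φ g) (Φ c) := (hΦ.1 g c).1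
      have h2 : dist (Φ g) (Φ c) ≤ dist (Φ g) p + dist p b' + dist b' (Φ c) :=
        dist_triangle4 _ _ _ _
      have h3 : dist (QuotientGroup.mk g : G ⧸ N) (QuotientGroup.mk h) ≤ dist g c := by
        rw [← hcmk]; exact dist_mk_le N hW hWq g c
      have h4 : (1 / K) * dist (QuotientGroup.mk g : G ⧸ N) (QuotientGroup.mk h)
          ≤ (1 / K) * dist g c :=
        mul_le_mul_of_nonneg_left h3 (by positivity)
      have h5 : dist p b' = dist (φ (QuotientGroup.mk g)) (φ (QuotientGroup.mk h)) := by
        rw [hreal, hp, hq]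
      linarith
    · -- upper bound
      obtain ⟨b0, hb0, hreal⟩ := exists_realize N hW hWq g h
      obtain ⟨q', hq', hdq'⟩ := fwd h b0 (mem_coset_iff.mpr hb0)
      have h1 : dist (φ (QuotientGroup.mk g)) (φ (QuotientGroup.mk h))
          = dist (QuotientGroup.mk p : G ⧸ N) (QuotientGroup.mk q') := by rw [hp, hq']
      have h2 : dist (QuotientGroup.mk p : G ⧸ N) (QuotientGroup.mk q') ≤ dist p q' :=
        dist_mk_le N hW hWq p q'
      have h3 : dist p q' ≤ dist p (Φ g) + dist (Φ g) (Φ b0) + dist (Φ b0) q' :=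
        dist_triangle4 _ _ _ _
      have h4 : dist (Φ g) (Φ b0) ≤ K * dist g b0 + C := (hΦ.1 g b0).2
      have h5 : dist p (Φ g) ≤ R + 1 := by rw [dist_comm]; exact hdp
      rw [hreal] at h4
      linarith
  · -- coarse surjectivity
    intro y
    obtain ⟨y0, rfl⟩ := QuotientGroup.mk_surjective y
    obtain ⟨a0, ha0⟩ := hΦ.2 y0
    obtain ⟨p, hp, hdp⟩ := fwd a0 a0 (mem_coset_iff.mpr rfl)
    refine ⟨QuotientGroup.mk a0, ?_⟩
    have h1 : dist (φ (QuotientGroup.mk a0)) (QuotientGroup.mk y0 : G ⧸ N)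
        = dist (QuotientGroup.mk p : G ⧸ N) (QuotientGroup.mk y0) := by rw [hp]
    have h2 : dist (QuotientGroup.mk p : G ⧸ N) (QuotientGroup.mk y0) ≤ dist p y0 :=
      dist_mk_le N hW hWq p y0
    have h3 : dist p y0 ≤ dist p (Φ a0) + dist (Φ a0) y0 := dist_triangle _ _ _
    have h5 : dist p (Φ a0) ≤ R + 1 := by rw [dist_comm]; exact hdp
    linarith
end

section
/- Let G be a group with the word metric coming from a finite generating set, and let A, B be subgroups of G. Then A is coarsely contained in B if and only if the intersection A ∩ B has finite index in A. -/
open Pointwise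

/-- `A` is coarsely contained in `B`: some `r ≥ 0` works so that every point of `A` is within
distance `r` of some point of `B`. -/
def CoarselyContained {X : Type*} [MetricSpace X] (A B : Set X) : Prop :=
  ∃ r : ℝ, 0 ≤ r ∧ ∀ a ∈ A, ∃ b ∈ B, dist a b ≤ r

private lemma list_prod_mem_pow {G : Type*} [Monoid G] {T : Set G} :
    ∀ l : List G, (∀ x ∈ l, x ∈ T) → l.prod ∈ T ^ l.length
  | [], _ => by simp [Set.mem_one]
  | x :: l, h => by
    rw [List.prod_cons, List.length_cons, pow_succ']
    exact Set.mul_mem_mul (h x (by simp))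
      (list_prod_mem_pow l fun y hy => h y (List.mem_cons_of_mem _ hy))

/-- Every element lies in the `wordLength`-th power of `S ∪ S⁻¹`, provided `S` generates. -/
private lemma mem_pow_wordLength {G : Type*} [Group G] {S : Set G}
    (hgen : Subgroup.closure S = ⊤) (g : G) : g ∈ (S ∪ S⁻¹) ^ (wordLength S g) := by
  have hg : g ∈ Submonoid.closure (S ∪ S⁻¹) := by
    rw [← Subgroup.closure_toSubmonoid, hgen]
    trivial
  obtain ⟨l, hl, hprod⟩ := Submonoid.exists_list_of_mem_closure hg
  have hne : {n : ℕ | g ∈ (S ∪ S⁻¹) ^ n}.Nonempty :=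
    ⟨l.length, hprod ▸ list_prod_mem_pow l hl⟩
  exact Nat.sInf_mem hne

/-- For subgroups `A, B` of a group `G` with a word metric, `A` is coarsely contained in `B`
iff `A ∩ B` has finite index in `A`. -/
theorem coarselyContained_iff_finiteIndex {G : Type*} [Group G] [MetricSpace G]
    (S : Set G) (hS : IsWordMetric S) (A B : Subgroup G) :
    CoarselyContained (A : Set G) (B : Set G) ↔ ((A ⊓ B).subgroupOf A).FiniteIndex := by
  obtain ⟨hSfin, hSgen, hdist⟩ := hS
  set H : Subgroup A := (A ⊓ B).subgroupOf A with hH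
  constructor
  · rintro ⟨r, hr0, hr⟩
    set T : Set G := S ∪ S⁻¹ with hT
    set N : ℕ := ⌊r⌋₊ with hN
    set W : Set G := ⋃ n ∈ Finset.range (N + 1), T ^ n with hW
    have hTfin : T.Finite := hSfin.union hSfin.inv
    have hpowfin : ∀ n : ℕ, (T ^ n).Finite := by
      intro n
      induction n with
      | zero => simp only [pow_zero]; exact Set.finite_one
      | succ n ih => rw [pow_succ]; exact ih.mul hTfin
    have hWfin : W.Finite :=
      Set.Finite.biUnion (Finset.finite_toSet _) fun n _ => hpowfin n
    -- choose for each `x : A` an element of `B` close to `x⁻¹`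
    have key : ∀ x : A, ∃ b : G, b ∈ B ∧ dist ((x : G))⁻¹ b ≤ r := by
      intro x
      obtain ⟨b, hbB, hbd⟩ := hr ((x : G))⁻¹ (A.inv_mem x.2)
      exact ⟨b, hbB, hbd⟩
    choose b hbB hbd using key
    have hwW : ∀ x : A, (x : G) * b x ∈ W := by
      intro x
      have h1 : (wordLength S ((x : G) * b x) : ℝ) ≤ r := by
        have := hbd x
        rwa [hdist, inv_inv] at this
      have h2 : wordLength S ((x : G) * b x) ≤ N :=
        Nat.le_floor (by exact_mod_cast h1)
      refine Set.mem_biUnion (Finset.mem_range.2 (Nat.lt_succ_of_le h2)) ?_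
      exact mem_pow_wordLength hSgen _
    haveI : Finite W := hWfin.to_subtype
    have hfin : Finite (A ⧸ H) := by
      refine Finite.of_injective
        (fun c : A ⧸ H => (⟨(c.out : G) * b c.out, hwW c.out⟩ : W)) ?_
      intro c₁ c₂ hc
      have he : (c₁.out : G) * b c₁.out = (c₂.out : G) * b c₂.out := by
        simpa using hc
      have hmem : (c₁.out)⁻¹ * c₂.out ∈ H := by
        refine Subgroup.mem_subgroupOf.2 ⟨Subgroup.mul_mem _ (A.inv_mem c₁.out.2) c₂.out.2, ?_⟩
        have : ((c₁.out)⁻¹ * c₂.out : A) = (b c₁.out) * (b c₂.out)⁻¹ := by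
          push_cast
          have h1 : (c₁.out : G) = ((c₂.out : G) * b c₂.out) * (b c₁.out)⁻¹ := by
            rw [← he, mul_inv_cancel_right]
          rw [h1]
          group
        rw [this]
        exact B.mul_mem (hbB c₁.out) (B.inv_mem (hbB c₂.out))
      calc c₁ = QuotientGroup.mk c₁.out := (QuotientGroup.out_eq' c₁).symm
        _ = QuotientGroup.mk c₂.out := (QuotientGroup.eq).2 hmem
        _ = c₂ := QuotientGroup.out_eq' c₂
    exact Subgroup.finiteIndex_of_finite_quotient
  · intro hfi
    haveI := hfi
    haveI : Finite (A ⧸ H) := Subgroup.finite_quotient_of_finiteIndex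
    haveI : Fintype (A ⧸ H) := Fintype.ofFinite _
    set r : ℕ := Finset.univ.sup fun c : A ⧸ H => wordLength S ((c.out : A) : G) with hrdef
    refine ⟨(r : ℝ), Nat.cast_nonneg r, ?_⟩
    intro a ha
    set x : A := ⟨a, ha⟩ with hx
    set c : A ⧸ H := QuotientGroup.mk x⁻¹ with hc
    set t : A := c.out with ht
    have hmem : (x⁻¹)⁻¹ * t ∈ H := (QuotientGroup.eq).1 (QuotientGroup.out_eq' c).symm
    rw [hH, Subgroup.mem_subgroupOf] at hmem
    have hxt : ((x⁻¹)⁻¹ * t : A) = (a * (t : G) : G) := by push_cast; rw [inv_inv]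
    rw [hxt] at hmem
    refine ⟨a * (t : G), hmem.2, ?_⟩
    have : dist a (a * (t : G)) = (wordLength S (t : G) : ℝ) := by
      rw [hdist, inv_mul_cancel_left]
    rw [this]
    exact_mod_cast Finset.le_sup (f := fun c : A ⧸ H => wordLength S ((c.out : A) : G))
      (Finset.mem_univ c)
end

section
/- Let G be a group with the word metric coming from a finite generating set, and let A, B be subgroups of G. Then A and B are coarsely equivalent (i.e., each is coarsely contained in the other) if and only if A and B are commensurable, i.e., A ∩ B has finite index in both A and B. -/
open Pointwise

namespace WMaux

variable {G : Type*} [Group G]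

lemma set_finite_pow {T : Set G} (hT : T.Finite) (n : ℕ) : (T ^ n).Finite := by
  induction n with
  | zero => rw [pow_zero]; exact Set.finite_one
  | succ n ih => rw [pow_succ]; exact ih.mul hT

lemma mem_pow_wordLength {S : Set G} (hgen : Subgroup.closure S = ⊤) (g : G) :
    g ∈ (S ∪ S⁻¹) ^ (wordLength S g) := by
  have hg : g ∈ Submonoid.closure (S ∪ S⁻¹) := by
    rw [← Subgroup.closure_toSubmonoid, hgen]; trivial
  obtain ⟨l, hl, hprod⟩ := Submonoid.exists_list_of_mem_closure hg
  have hne : {n : ℕ | g ∈ (S ∪ S⁻¹) ^ n}.Nonempty := by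
    refine ⟨l.length, ?_⟩
    show g ∈ (S ∪ S⁻¹) ^ l.length
    rw [Set.mem_pow]
    exact ⟨fun i => ⟨l.get i, hl _ (l.get_mem i)⟩, by simp [List.ofFn_getElem, hprod]⟩
  exact Nat.sInf_mem hne

end WMaux

namespace WMaux

variable {G : Type*} [Group G] [MetricSpace G]

lemma cc_finiteIndex {S : Set G} (hS : IsWordMetric S) (A B : Subgroup G)
    (h : CoarselyContained (A : Set G) (B : Set G)) :
    ((A ⊓ B).subgroupOf A).FiniteIndex := by
  obtain ⟨hSfin, hgen, hdist⟩ := hS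
  obtain ⟨r, hr0, hr⟩ := h
  set T := S ∪ S⁻¹ with hT
  have hTfin : T.Finite := hSfin.union hSfin.inv
  set N : ℕ := ⌊r⌋₊ with hN
  set F : Set G := ⋃ n ∈ Finset.range (N + 1), T ^ n with hF
  have hFfin : F.Finite :=
    Set.Finite.biUnion (Finset.range (N + 1)).finite_toSet fun n _ => set_finite_pow hTfin n
  have key : ∀ a : A, ∃ g : G, g ∈ F ∧ (a : G) * g ∈ B := by
    intro a
    obtain ⟨b, hbB, hd⟩ := hr a a.2
    refine ⟨(a : G)⁻¹ * b, ?_, by rw [mul_inv_cancel_left]; exact hbB⟩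
    have hdw : dist (a : G) b = (wordLength S ((a : G)⁻¹ * b) : ℝ) := hdist _ _
    have hle : wordLength S ((a : G)⁻¹ * b) ≤ N := by
      rw [hdw] at hd
      exact Nat.le_floor (by exact_mod_cast hd)
    have hmem := mem_pow_wordLength hgen ((a : G)⁻¹ * b)
    exact Set.mem_biUnion (Finset.mem_range.mpr (by omega)) hmem
  choose f hfF hfB using key
  haveI : Finite F := hFfin.to_subtype
  haveI : Finite (A ⧸ (A ⊓ B).subgroupOf A) := by
    refine Finite.of_injective
      (fun q : A ⧸ (A ⊓ B).subgroupOf A => (⟨f q.out⁻¹, hfF q.out⁻¹⟩ : F)) ?_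
    intro q1 q2 hq
    simp only [Subtype.mk.injEq] at hq
    have hb1 := hfB q1.out⁻¹
    have hb2 := hfB q2.out⁻¹
    rw [hq] at hb1
    have hBmem : ((q1.out)⁻¹ * q2.out : G) ∈ B := by
      have : ((q1.out⁻¹ : A) : G) * f q2.out⁻¹ * (((q2.out⁻¹ : A) : G) * f q2.out⁻¹)⁻¹ ∈ B :=
        B.mul_mem hb1 (B.inv_mem hb2)
      simpa [mul_assoc] using this
    rw [← QuotientGroup.out_eq' q1, ← QuotientGroup.out_eq' q2, QuotientGroup.eq]
    rw [Subgroup.mem_subgroupOf]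
    exact ⟨A.mul_mem (A.inv_mem q1.out.2) q2.out.2, hBmem⟩
  exact Subgroup.finiteIndex_of_finite_quotient

lemma finiteIndex_cc {S : Set G} (hS : IsWordMetric S) (A B : Subgroup G)
    (h : ((A ⊓ B).subgroupOf A).FiniteIndex) :
    CoarselyContained (A : Set G) (B : Set G) := by
  obtain ⟨hSfin, hgen, hdist⟩ := hS
  haveI := h
  haveI : Fintype (A ⧸ (A ⊓ B).subgroupOf A) := Fintype.ofFinite _
  set r : ℕ :=
    Finset.univ.sup (fun q : A ⧸ (A ⊓ B).subgroupOf A => wordLength S ((q.out : A) : G)) with hrdef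
  refine ⟨(r : ℝ), by positivity, ?_⟩
  intro a haA
  set aa : A := ⟨a, haA⟩ with haa
  set q : A ⧸ (A ⊓ B).subgroupOf A := ((aa⁻¹ : A) : A ⧸ (A ⊓ B).subgroupOf A) with hqdef
  have hq : ((q.out : A) : A ⧸ (A ⊓ B).subgroupOf A) = ((aa⁻¹ : A) : A ⧸ (A ⊓ B).subgroupOf A) :=
    QuotientGroup.out_eq' q
  have hmem : ((q.out)⁻¹ * aa⁻¹ : A) ∈ (A ⊓ B).subgroupOf A := (QuotientGroup.eq).mp hq
  rw [Subgroup.mem_subgroupOf] at hmem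
  have hBmem : (((q.out)⁻¹ * aa⁻¹ : A) : G) ∈ B := hmem.2
  have hbB : a * ((q.out : A) : G) ∈ B := by
    have := B.inv_mem hBmem
    simpa [haa, mul_assoc] using this
  refine ⟨a * ((q.out : A) : G), hbB, ?_⟩
  have hdw : dist a (a * ((q.out : A) : G)) = (wordLength S (a⁻¹ * (a * ((q.out : A) : G))) : ℝ) :=
    hdist _ _
  rw [hdw, inv_mul_cancel_left]
  exact_mod_cast Finset.le_sup (f := fun q : A ⧸ (A ⊓ B).subgroupOf A => wordLength S ((q.out : A) : G)) (Finset.mem_univ q)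

end WMaux

/-- For subgroups `A, B` of a group `G` with a word metric, `A` and `B` are coarsely
equivalent (each coarsely contained in the other) iff they are commensurable, i.e. `A ∩ B`
has finite index in both `A` and `B`. -/
theorem coarselyEquivalent_iff_commensurable {G : Type*} [Group G] [MetricSpace G]
    (S : Set G) (hS : IsWordMetric S) (A B : Subgroup G) :
    (CoarselyContained (A : Set G) (B : Set G) ∧ CoarselyContained (B : Set G) (A : Set G)) ↔
      (((A ⊓ B).subgroupOf A).FiniteIndex ∧ ((A ⊓ B).subgroupOf B).FiniteIndex) := by
  have hAB : (B ⊓ A) = (A ⊓ B) := inf_comm A B ▸ rfl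
  constructor
  · rintro ⟨h1, h2⟩
    refine ⟨WMaux.cc_finiteIndex hS A B h1, ?_⟩
    have h2' := WMaux.cc_finiteIndex hS B A h2
    rwa [inf_comm B A] at h2'
  · rintro ⟨h1, h2⟩
    refine ⟨WMaux.finiteIndex_cc hS A B h1, ?_⟩
    have h2' : ((B ⊓ A).subgroupOf B).FiniteIndex := by rwa [inf_comm B A]
    exact WMaux.finiteIndex_cc hS B A h2'
end

section
/- Let G be a group acting on the real line ℝ by isometries such that the action is properly discontinuous (for every compact set K ⊆ ℝ, the set of g ∈ G with g·K ∩ K ≠ ∅ is finite) and cocompact (there is a compact set K₀ ⊆ ℝ with ⋃_{g ∈ G} g·K₀ = ℝ). Then G contains an infinite cyclic subgroup of finite index. -/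
open Pointwise

/-- If a group `G` acts on `ℝ` by isometries, properly discontinuously and cocompactly, then
`G` contains an infinite cyclic subgroup of finite index. -/
theorem exists_infinite_cyclic_finiteIndex_of_proper_cocompact_isometric_action
    {G : Type*} [Group G] [MulAction G ℝ]
    (hiso : ∀ g : G, Isometry fun x : ℝ => g • x)
    (hproper : ∀ K : Set ℝ, IsCompact K → {g : G | ((g • K) ∩ K).Nonempty}.Finite)
    (hcocompact : ∃ K₀ : Set ℝ, IsCompact K₀ ∧ ⋃ g : G, g • K₀ = Set.univ) :
    ∃ H : Subgroup G,
      (∃ g : G, (∀ n : ℕ, 1 ≤ n → g ^ n ≠ 1) ∧ H = Subgroup.zpowers g) ∧ H.FiniteIndex := by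
  classical
  -- distances are preserved
  have hdist : ∀ (g : G) (x y : ℝ), |g • x - g • y| = |x - y| := by
    intro g x y
    have := (hiso g).dist_eq x y
    simpa [Real.dist_eq] using this
  set ε : G → ℝ := fun g => g • (1:ℝ) - g • (0:ℝ) with hε
  -- each g acts as an affine isometry
  have hkey : ∀ (g : G) (x : ℝ), g • x = g • (0:ℝ) + ε g * x := by
    intro g x
    have h0 := hdist g x 0
    have h1 := hdist g x 1
    have he := hdist g 1 0
    have hsq0 : (g • x - g • (0:ℝ))^2 = x^2 := by
      have := congrArg (· ^ 2) h0
      simpa [sq_abs] using this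
    have hsq1 : (g • x - g • (1:ℝ))^2 = (x - 1)^2 := by
      have := congrArg (· ^ 2) h1
      simpa [sq_abs] using this
    have hsqe : (g • (1:ℝ) - g • (0:ℝ))^2 = 1 := by
      have := congrArg (· ^ 2) he
      simpa [sq_abs] using this
    simp only [hε]
    linear_combination ((g • (1:ℝ) - g • (0:ℝ))/2) * hsq0 -
      ((g • (1:ℝ) - g • (0:ℝ))/2) * hsq1 + ((g • (1:ℝ) - g • (0:ℝ))/2) * hsqe -
      (g • x - g • (0:ℝ)) * hsqe
  have hεone : ∀ g : G, ε g = 1 ∨ ε g = -1 := by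
    intro g
    have he := hdist g 1 0
    have : |ε g| = 1 := by simpa [hε] using he
    rcases abs_eq (by norm_num : (0:ℝ) ≤ 1) |>.mp this with h | h
    · exact Or.inl h
    · exact Or.inr h
  -- ε is multiplicative
  have hεmul : ∀ g h : G, ε (g * h) = ε g * ε h := by
    intro g h
    have A1 : (g * h) • (1:ℝ) = g • (0:ℝ) + ε g * (h • (0:ℝ) + ε h * 1) := by
      rw [mul_smul, hkey g (h • (1:ℝ)), hkey h 1]
    have A0 : (g * h) • (0:ℝ) = g • (0:ℝ) + ε g * (h • (0:ℝ)) := by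
      rw [mul_smul]; exact hkey g _
    show ε (g * h) = _
    rw [hε]
    simp only
    rw [A1, A0]
    simp only [hε]
    ring
  have hεinv : ∀ g : G, ε g⁻¹ = ε g := by
    intro g
    have h1 : ε (g⁻¹ * g) = ε g⁻¹ * ε g := hεmul _ _
    have h2 : ε (1 : G) = 1 := by simp [hε]
    rw [inv_mul_cancel, h2] at h1
    rcases hεone g with h | h <;> rcases hεone g⁻¹ with h' | h' <;>
      simp [h, h'] at h1 ⊢ <;> nlinarith
  have hinv0 : ∀ g : G, g⁻¹ • (0:ℝ) = -(ε g⁻¹ * (g • (0:ℝ))) := by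
    intro g
    have : g⁻¹ • (g • (0:ℝ)) = (0:ℝ) := by
      rw [← mul_smul, inv_mul_cancel, one_smul]
    rw [hkey g⁻¹ (g • (0:ℝ))] at this
    linarith [this]
  -- the stabilizer-like finite set
  have hS : {g : G | g • (0:ℝ) = 0}.Finite := by
    have h := hproper {0} isCompact_singleton
    refine h.subset ?_
    intro g hg
    simp only [Set.mem_setOf_eq] at hg ⊢
    refine ⟨0, ?_, rfl⟩
    rw [Set.smul_set_singleton]
    simp [hg]
  set S : Set G := {g : G | g • (0:ℝ) = 0} with hSdef
  -- discreteness
  have hdisc : ∀ r : ℝ, 0 ≤ r → {g : G | |g • (0:ℝ)| ≤ r}.Finite := by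
    intro r hr
    have h := hproper (Set.Icc (-r) r) isCompact_Icc
    refine h.subset ?_
    intro g hg
    simp only [Set.mem_setOf_eq] at hg ⊢
    refine ⟨g • (0:ℝ), ⟨0, ?_, rfl⟩, ?_⟩
    · constructor <;> linarith
    · rcases abs_le.mp hg with ⟨h1, h2⟩
      exact ⟨h1, h2⟩
  -- cocompactness : orbit of 0 is M-dense
  obtain ⟨K₀, hK₀c, hK₀u⟩ := hcocompact
  obtain ⟨r₀, hr₀⟩ := hK₀c.isBounded.subset_closedBall 0
  set M : ℝ := max r₀ 1 with hM
  have hM1 : (1:ℝ) ≤ M := le_max_right _ _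
  have hMpos : (0:ℝ) < M := lt_of_lt_of_le one_pos hM1
  have hdense : ∀ x : ℝ, ∃ g : G, |g • (0:ℝ) - x| ≤ M := by
    intro x
    have hx : x ∈ ⋃ g : G, g • K₀ := by rw [hK₀u]; trivial
    obtain ⟨_, ⟨g, rfl⟩, k, hk, hgk⟩ := hx
    have hgk' : g • k = x := hgk
    refine ⟨g, ?_⟩
    have hkb : |k| ≤ r₀ := by
      have := hr₀ hk
      simpa [Real.dist_eq] using this
    have : |g • (0:ℝ) - g • k| = |0 - k| := hdist g 0 k
    rw [hgk'] at this
    rw [this]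
    simp only [zero_sub, abs_neg]
    exact hkb.trans (le_max_left _ _)
  -- there is a positive element with nonzero translation
  have hnontriv : ∃ p : G, ε p = 1 ∧ p • (0:ℝ) ≠ 0 := by
    obtain ⟨g, hg⟩ := hdense (4 * M)
    obtain ⟨h, hh⟩ := hdense (-(4 * M))
    have hg3 : 3 * M ≤ g • (0:ℝ) := by
      rcases abs_le.mp hg with ⟨h1, _⟩; linarith
    have hh3 : h • (0:ℝ) ≤ -(3 * M) := by
      rcases abs_le.mp hh with ⟨_, h2⟩; linarith
    rcases hεone g with hg1 | hg1
    · exact ⟨g, hg1, by nlinarith⟩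
    rcases hεone h with hh1 | hh1
    · exact ⟨h, hh1, by nlinarith⟩
    refine ⟨g * h, by rw [hεmul, hg1, hh1]; ring, ?_⟩
    have : (g * h) • (0:ℝ) = g • (0:ℝ) + ε g * (h • (0:ℝ)) := by
      rw [mul_smul, hkey g (h • (0:ℝ))]
    rw [this, hg1]
    nlinarith
  -- the translation subgroup
  set T : AddSubgroup ℝ :=
    { carrier := {t : ℝ | ∃ g : G, ε g = 1 ∧ g • (0:ℝ) = t}
      zero_mem' := ⟨1, by simp [hε], by simp⟩
      add_mem' := by
        rintro a b ⟨g, hg, rfl⟩ ⟨h, hh, rfl⟩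
        refine ⟨g * h, by rw [hεmul, hg, hh]; ring, ?_⟩
        rw [mul_smul, hkey g (h • (0:ℝ)), hg]
        ring
      neg_mem' := by
        rintro a ⟨g, hg, rfl⟩
        refine ⟨g⁻¹, by rw [hεinv, hg], ?_⟩
        rw [hinv0, hεinv, hg]
        ring } with hT
  -- T is not dense
  have hTnotdense : ¬ Dense (T : Set ℝ) := by
    intro hd
    have hF : ((T : Set ℝ) ∩ Set.Icc (-1) 1).Finite := by
      have himg : ((T : Set ℝ) ∩ Set.Icc (-1) 1) ⊆
          (fun g : G => g • (0:ℝ)) '' {g : G | |g • (0:ℝ)| ≤ 1} := by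
        rintro t ⟨⟨g, _, rfl⟩, ht⟩
        exact ⟨g, abs_le.mpr ⟨ht.1, ht.2⟩, rfl⟩
      exact ((hdisc 1 zero_le_one).image _).subset himg
    set F := (T : Set ℝ) ∩ Set.Icc (-1) 1 with hFdef
    have hopen : IsOpen (Set.Ioo (0:ℝ) 1 \ F) :=
      isOpen_Ioo.sdiff hF.isClosed
    have hne : (Set.Ioo (0:ℝ) 1 \ F).Nonempty := by
      have : (Set.Ioo (0:ℝ) 1).Infinite := Set.Ioo_infinite one_pos
      exact (this.diff hF).nonempty
    obtain ⟨t, htT, htU⟩ := hd.exists_mem_open hopen hne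
    exact htU.2 ⟨htT, ⟨by linarith [htU.1.1], le_of_lt htU.1.2⟩⟩
  obtain ⟨a, ha⟩ := (T.dense_or_cyclic).resolve_left hTnotdense
  -- a generator g₀ of the translations
  have haT : a ∈ T := by
    rw [ha]
    exact AddSubgroup.mem_closure_singleton.mpr ⟨1, one_smul _ _⟩
  obtain ⟨g₀, hg₀ε, hg₀0⟩ := haT
  have hane : a ≠ 0 := by
    rintro rfl
    obtain ⟨p, hpε, hp0⟩ := hnontriv
    have hpT : p • (0:ℝ) ∈ T := ⟨p, hpε, rfl⟩
    rw [ha] at hpT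
    obtain ⟨n, hn⟩ := AddSubgroup.mem_closure_singleton.mp hpT
    simp at hn
    exact hp0 hn.symm
  -- powers of g₀
  have hpow : ∀ (g : G), ε g = 1 → ∀ n : ℕ, ε (g ^ n) = 1 ∧ (g ^ n) • (0:ℝ) = n * (g • (0:ℝ)) := by
    intro g hg n
    induction n with
    | zero => simp [hε]
    | succ k ih =>
      constructor
      · rw [pow_succ, hεmul, ih.1, hg]; ring
      · rw [pow_succ, mul_smul, hkey (g ^ k) (g • (0:ℝ)), ih.1, ih.2]
        push_cast; ring
  have hzpow : ∀ n : ℤ, (g₀ ^ n) • (0:ℝ) = n * a := by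
    intro n
    rcases n with n | n
    · rw [Int.ofNat_eq_coe, zpow_natCast]
      rw [(hpow g₀ hg₀ε n).2, hg₀0]
      push_cast; ring
    · have hinvε : ε g₀⁻¹ = 1 := by rw [hεinv, hg₀ε]
      have hinv0' : g₀⁻¹ • (0:ℝ) = -a := by
        rw [hinv0, hεinv, hg₀ε, hg₀0]; ring
      have : g₀ ^ (Int.negSucc n) = (g₀⁻¹) ^ (n + 1) := by
        rw [zpow_negSucc, inv_pow]
      rw [this, (hpow g₀⁻¹ hinvε (n+1)).2, hinv0']
      push_cast; ring
  -- decomposition of positive elements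
  have hdecomp : ∀ g : G, ε g = 1 → ∃ s ∈ S, ∃ n : ℤ, g = s * g₀ ^ n := by
    intro g hg
    have hgT : g • (0:ℝ) ∈ T := ⟨g, hg, rfl⟩
    rw [ha] at hgT
    obtain ⟨n, hn⟩ := AddSubgroup.mem_closure_singleton.mp hgT
    refine ⟨g * g₀ ^ (-n), ?_, n, by group⟩
    show (g * g₀ ^ (-n)) • (0:ℝ) = 0
    rw [mul_smul, hzpow (-n), hkey g _, hg]
    simp only [zsmul_eq_mul] at hn
    push_cast
    linarith
  refine ⟨Subgroup.zpowers g₀, ⟨g₀, ?_, rfl⟩, ?_⟩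
  · -- infinite order
    intro n hn hcon
    have := hzpow (n : ℤ)
    rw [zpow_natCast, hcon, one_smul] at this
    have hna : (n:ℝ) * a ≠ 0 := by
      apply mul_ne_zero _ hane
      exact_mod_cast Nat.one_le_iff_ne_zero.mp hn
    exact hna this.symm
  · -- finite index
    set H := Subgroup.zpowers g₀ with hH
    -- choose a reversing element if one exists
    obtain ⟨g₁, hg₁⟩ : ∃ g₁ : G, ε g₁ = -1 ∨ ∀ g : G, ε g ≠ -1 := by
      by_cases hex : ∃ g : G, ε g = -1
      · obtain ⟨g, hg⟩ := hex; exact ⟨g, Or.inl hg⟩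
      · push_neg at hex; exact ⟨1, Or.inr hex⟩
    have hSfin : Finite ↥S := hS.to_subtype
    have hsurj : Function.Surjective
        (fun x : ↥S ⊕ ↥S => match x with
          | Sum.inl s => ((s : G) : G ⧸ H)
          | Sum.inr s => ((g₁ * (s : G) : G) : G ⧸ H)) := by
      rintro ⟨g⟩
      rcases hεone g with hg | hg
      · obtain ⟨s, hs, n, rfl⟩ := hdecomp g hg
        refine ⟨Sum.inl ⟨s, hs⟩, ?_⟩
        show ((s : G) : G ⧸ H) = ((s * g₀ ^ n : G) : G ⧸ H)
        rw [QuotientGroup.eq]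
        refine Subgroup.mem_zpowers_iff.mpr ⟨n, ?_⟩
        group
      · rcases hg₁ with hg₁ | hg₁
        swap
        · exact absurd hg (hg₁ g)
        have hpε : ε (g₁⁻¹ * g) = 1 := by
          rw [hεmul, hεinv, hg₁, hg]; ring
        obtain ⟨s, hs, n, hdec⟩ := hdecomp _ hpε
        refine ⟨Sum.inr ⟨s, hs⟩, ?_⟩
        show ((g₁ * s : G) : G ⧸ H) = (g : G ⧸ H)
        rw [QuotientGroup.eq]
        have hgval : (g₁ * s)⁻¹ * g = g₀ ^ n := by
          have hg' : g = g₁ * (s * g₀ ^ n) := by rw [← hdec]; group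
          rw [hg']; group
        rw [hgval]
        exact Subgroup.mem_zpowers_iff.mpr ⟨n, rfl⟩
    have : Finite (G ⧸ H) := Finite.of_surjective _ hsurj
    exact Subgroup.finiteIndex_of_finite_quotient
end
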